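/- arXiv:1409.3977 — 3 statements merged into one kernel-verified Lean document; each statement's English description precedes it below -/
import Mathlib

section
/- Let G be an abelian group and ω : G × G → 𝕋 a 2-cocycle. Then for each fixed s ∈ G, the map h_ω(s) : G → 𝕋 defined by h_ω(s)(t) := ω(s,t)·conj(ω(t,s)) is a group homomorphism from G to 𝕋. -/
/-- For a 2-cocycle `ω` on an abelian group `G` and fixed `s`, the map
`t ↦ h_ω(s)(t) = ω(s,t)·conj(ω(t,s))` is a homomorphism from `G` to `𝕋`. -/
theorem stmt5 {G : Type*} [AddCommGroup G] (ω : G → G → ℂ)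
    (habs : ∀ s t, ‖ω s t‖ = 1)
    (hcoc : ∀ s t r, ω s t * ω (s + t) r = ω s (t + r) * ω t r) :
    ∀ s t t', ω s (t + t') * (starRingEnd ℂ) (ω (t + t') s)
      = (ω s t * (starRingEnd ℂ) (ω t s)) * (ω s t' * (starRingEnd ℂ) (ω t' s)) := by
  have hne : ∀ s t, ω s t ≠ 0 := by
    intro s t h
    have := habs s t
    rw [h] at this; simp at this
  have hconj : ∀ s t, (starRingEnd ℂ) (ω s t) = (ω s t)⁻¹ := by
    intro s t
    have h1 : ω s t * (starRingEnd ℂ) (ω s t) = 1 := by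
      rw [Complex.mul_conj]
      rw [Complex.normSq_eq_norm_sq, habs]; norm_num
    exact (inv_eq_of_mul_eq_one_right h1).symm
  intro s t t'
  simp only [hconj]
  rw [mul_comm (ω s t) _, mul_comm (ω s t') _, inv_mul_eq_div, inv_mul_eq_div,
    mul_comm (ω s (t + t')) _, inv_mul_eq_div, div_mul_div_comm,
    div_eq_div_iff (hne _ _) (mul_ne_zero (hne _ _) (hne _ _))]
  -- goal: ω s (t+t') * (ω t s * ω t' s) = ω s t * ω s t' * ω (t+t') s (up to assoc)
  have h1 := hcoc s t t'
  have h2 := hcoc t s t'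
  have h3 := hcoc t t' s
  have key : ω s (t + t') * (ω t s * ω t' s) * ω t t'
      = ω s t * ω s t' * ω (t + t') s * ω t t' := by
    have h2' : ω t s * ω (s + t) t' = ω t (s + t') * ω s t' := by rw [add_comm s t]; exact h2
    calc ω s (t + t') * (ω t s * ω t' s) * ω t t'
        = (ω s (t + t') * ω t t') * ω t s * ω t' s := by ring
      _ = (ω s t * ω (s + t) t') * ω t s * ω t' s := by rw [← h1]
      _ = (ω t s * ω (s + t) t') * ω s t * ω t' s := by ring
      _ = (ω t (s + t') * ω s t') * ω s t * ω t' s := by rw [h2']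
      _ = ω s t * ω s t' * (ω t (t' + s) * ω t' s) := by rw [add_comm s t']; ring
      _ = ω s t * ω s t' * (ω t t' * ω (t + t') s) := by rw [h3]
      _ = ω s t * ω s t' * ω (t + t') s * ω t t' := by ring
  have := mul_right_cancel₀ (hne t t') key
  linear_combination this
end

section
/- Let G be an abelian group and ω : G × G → 𝕋 a 2-cocycle. Then the map s ↦ h_ω(s), where h_ω(s)(t) := ω(s,t)·conj(ω(t,s)), is a group homomorphism from G to the group Hom(G, 𝕋) of characters of G (with pointwise multiplication). -/
/-- Key polynomial identity from the cocycle condition on an abelian group. -/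
theorem stmt6_key {G : Type*} [AddCommGroup G] (ω : G → G → ℂ)
    (hne : ∀ s t, ω s t ≠ 0)
    (hcoc : ∀ s t r, ω s t * ω (s + t) r = ω s (t + r) * ω t r) :
    ∀ s t t', ω s (t + t') * (ω t s * ω t' s) = (ω s t * ω s t') * ω (t + t') s := by
  intro s t t'
  have A := hcoc s t t'
  have B := hcoc t s t'
  have C := hcoc t t' s
  rw [add_comm t s] at B
  rw [add_comm t' s] at C
  have h2 : (ω s (t + t') * (ω t s * ω t' s)) * ω t t'
      = ((ω s t * ω s t') * ω (t + t') s) * ω t t' := by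
    linear_combination -(ω t s * ω t' s) * A + (ω s t * ω t' s) * B - (ω s t * ω s t') * C
  exact mul_right_cancel₀ (hne t t') h2

/-- For a 2-cocycle `ω` on an abelian group `G`, the map
`s ↦ h_ω(s)`, with `h_ω(s)(t) = ω(s,t)·conj(ω(t,s))`, is a group homomorphism from `G`
into the group `Hom(G,𝕋)` of characters of `G` with pointwise multiplication:
each `h_ω(s)` is a character, and `h_ω(s+s') = h_ω(s)·h_ω(s')` pointwise. -/
theorem stmt6 {G : Type*} [AddCommGroup G] (ω : G → G → ℂ)
    (habs : ∀ s t, ‖ω s t‖ = 1)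
    (hcoc : ∀ s t r, ω s t * ω (s + t) r = ω s (t + r) * ω t r) :
    (∀ s t t', ω s (t + t') * (starRingEnd ℂ) (ω (t + t') s)
      = (ω s t * (starRingEnd ℂ) (ω t s)) * (ω s t' * (starRingEnd ℂ) (ω t' s))) ∧
    (∀ s s' t, ω (s + s') t * (starRingEnd ℂ) (ω t (s + s'))
      = (ω s t * (starRingEnd ℂ) (ω t s)) * (ω s' t * (starRingEnd ℂ) (ω t s'))) := by
  have hne : ∀ s t, ω s t ≠ 0 := by
    intro s t h
    have := habs s t
    rw [h] at this
    simp at this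
  have hinv : ∀ s t, (starRingEnd ℂ) (ω s t) = (ω s t)⁻¹ := by
    intro s t
    rw [← Complex.inv_eq_conj (habs s t)]
  have key := stmt6_key ω hne hcoc
  constructor
  · intro s t t'
    rw [hinv, hinv, hinv]
    have h1 := hne (t + t') s
    have h2 := hne t s
    have h3 := hne t' s
    field_simp
    linear_combination key s t t'
  · intro s s' t
    rw [hinv, hinv, hinv]
    have h1 := hne t (s + s')
    have h2 := hne t s
    have h3 := hne t s'
    field_simp
    linear_combination -(key t s s')
end

section
/- Let J ∈ M_n(ℝ) be skew-symmetric. For Schwartz functions f, g on ℝⁿ, the Fourier transform of the deformed product f ×_J g, defined by (f ×_J g)(x) = ∫∫ f(x−Ju) g(x−v) e^{2πi⟨u,v⟩} dv du (iterated integral), satisfies (f ×_J g)^ = f̂ *_{ω_J} ĝ, where (φ *_{ω_J} ψ)(z) = ∫ φ(u) ψ(z−u) e^{2πi⟨Ju, z−u⟩} du and f̂(u) = ∫ f(s) e^{−2πi⟨s,u⟩} ds. -/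
open Matrix Real MeasureTheory

/-- The Fourier transform `f̂(u) = ∫ f(s) e^{−2πi⟨s,u⟩} ds` on `ℝⁿ`. -/
noncomputable def fourierT {n : ℕ} (f : (Fin n → ℝ) → ℂ) : (Fin n → ℝ) → ℂ :=
  fun u => ∫ s, f s * Complex.exp (-(2 * (π : ℂ) * Complex.I * ((s ⬝ᵥ u : ℝ) : ℂ)))

/-- Rieffel's deformed product
`(f ×_J g)(x) = ∫∫ f(x−Ju) g(x−v) e^{2πi⟨u,v⟩} dv du` (iterated integral). -/
noncomputable def deformedProd {n : ℕ} (J : Matrix (Fin n) (Fin n) ℝ)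
    (f g : (Fin n → ℝ) → ℂ) : (Fin n → ℝ) → ℂ :=
  fun x => ∫ u, ∫ v,
    f (x - J.mulVec u) * g (x - v) * Complex.exp (2 * (π : ℂ) * Complex.I * ((u ⬝ᵥ v : ℝ) : ℂ))

/-- The `ω_J`-twisted convolution
`(φ *_{ω_J} ψ)(z) = ∫ φ(u) ψ(z−u) e^{2πi⟨Ju, z−u⟩} du`. -/
noncomputable def twConvJ {n : ℕ} (J : Matrix (Fin n) (Fin n) ℝ)
    (φ ψ : (Fin n → ℝ) → ℂ) : (Fin n → ℝ) → ℂ :=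
  fun z => ∫ u,
    φ u * ψ (z - u) * Complex.exp (2 * (π : ℂ) * Complex.I * ((J.mulVec u ⬝ᵥ (z - u) : ℝ) : ℂ))

section Aux
open FourierTransform
variable {n : ℕ}

noncomputable def toE (g : SchwartzMap (Fin n → ℝ) ℂ) : SchwartzMap (EuclideanSpace ℝ (Fin n)) ℂ :=
  SchwartzMap.compCLMOfContinuousLinearEquiv ℝ
    (PiLp.continuousLinearEquiv 2 ℝ (fun _ : Fin n => ℝ)) g

lemma fourierT_eq (g : SchwartzMap (Fin n → ℝ) ℂ) :
    fourierT ⇑g = fun u => 𝓕 (⇑(toE g)) ((MeasurableEquiv.toLp 2 (Fin n → ℝ)) u) := by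
  funext u
  rw [Real.fourier_eq']
  rw [← ((EuclideanSpace.volume_preserving_symm_measurableEquiv_toLp (Fin n)).symm).integral_comp
      (MeasurableEquiv.measurableEmbedding _) _]
  simp only [fourierT]
  congr 1
  funext s
  have h1 : (inner ℝ ((MeasurableEquiv.toLp 2 (Fin n → ℝ)).symm.symm s)
      ((MeasurableEquiv.toLp 2 (Fin n → ℝ)) u) : ℝ) = s ⬝ᵥ u := by
    simp [PiLp.inner_apply, dotProduct, mul_comm]
  rw [h1]
  have h2 : (toE g) ((MeasurableEquiv.toLp 2 (Fin n → ℝ)).symm.symm s) = g s := rfl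
  rw [smul_eq_mul, h2, mul_comm]
  congr 1
  push_cast
  ring

lemma fourierT_integrable (g : SchwartzMap (Fin n → ℝ) ℂ) :
    Integrable (fourierT ⇑g) (volume : Measure (Fin n → ℝ)) := by
  rw [fourierT_eq]
  have h𝓕 : Integrable (𝓕 (⇑(toE g))) (volume : Measure (EuclideanSpace ℝ (Fin n))) := by
    have : 𝓕 (⇑(toE g)) = ⇑(SchwartzMap.fourierTransformCLM ℝ (toE g)) := rfl
    rw [this]
    exact (SchwartzMap.fourierTransformCLM ℝ (toE g)).integrable
  exact (((EuclideanSpace.volume_preserving_symm_measurableEquiv_toLp (Fin n)).symm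
    (MeasurableEquiv.toLp 2 (Fin n → ℝ)).symm).integrable_comp
    h𝓕.aestronglyMeasurable).mpr h𝓕

lemma fourierT_continuous (g : SchwartzMap (Fin n → ℝ) ℂ) :
    Continuous (fourierT ⇑g) := by
  rw [fourierT_eq]
  exact (SchwartzMap.fourierTransformCLM ℝ (toE g)).continuous.comp
    (PiLp.continuousLinearEquiv 2 ℝ (fun _ : Fin n => ℝ)).symm.continuous

lemma shear_mp (J : Matrix (Fin n) (Fin n) ℝ) :
    MeasurePreserving (fun p : (Fin n → ℝ) × (Fin n → ℝ) => (p.1 - J.mulVec p.2, p.2))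
      (volume.prod volume) (volume.prod volume) := by
  have hmv : Continuous fun u : Fin n → ℝ => J.mulVec u :=
    continuous_const.matrix_mulVec continuous_id
  have hS : MeasurePreserving (fun q : (Fin n → ℝ) × (Fin n → ℝ) => (q.1, q.2 - J.mulVec q.1))
      (volume.prod volume) (volume.prod volume) := by
    apply MeasurePreserving.skew_product (g := fun a c => c - J.mulVec a)
      (MeasurePreserving.id _)
    · exact (continuous_snd.sub (hmv.comp continuous_fst)).measurable
    · exact Filter.Eventually.of_forall fun a =>
        (measurePreserving_sub_right volume (J.mulVec a)).map_eq
  have hsw : MeasurePreserving (Prod.swap : ((Fin n → ℝ) × (Fin n → ℝ)) → _)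
      (volume.prod volume) (volume.prod volume) := Measure.measurePreserving_swap
  have h := (hsw.comp hS).comp hsw
  convert h using 1
  rfl

lemma norm_phase (c : ℝ) : ‖Complex.exp (2 * (π : ℂ) * Complex.I * (c : ℂ))‖ = 1 := by
  rw [Complex.norm_exp]
  norm_num [Complex.mul_re]

lemma norm_phase_neg (c : ℝ) : ‖Complex.exp (-(2 * (π : ℂ) * Complex.I * (c : ℂ)))‖ = 1 := by
  rw [Complex.norm_exp]
  norm_num [Complex.mul_re]

lemma H_integrable (J : Matrix (Fin n) (Fin n) ℝ) (f g : SchwartzMap (Fin n → ℝ) ℂ)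
    (z : Fin n → ℝ) :
    Integrable (Function.uncurry fun x u =>
      f (x - J.mulVec u) * (Complex.exp (2 * (π : ℂ) * Complex.I * ((u ⬝ᵥ x : ℝ) : ℂ)) *
        fourierT (⇑g) u) * Complex.exp (-(2 * (π : ℂ) * Complex.I * ((x ⬝ᵥ z : ℝ) : ℂ))))
      ((volume : Measure (Fin n → ℝ)).prod volume) := by
  have hmv : Continuous fun u : Fin n → ℝ => J.mulVec u :=
    continuous_const.matrix_mulVec continuous_id
  have hbase : Integrable (fun p : (Fin n → ℝ) × (Fin n → ℝ) => f p.1 * fourierT (⇑g) p.2)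
      (volume.prod volume) := f.integrable.mul_prod (fourierT_integrable g)
  have hcomp : Integrable (fun p : (Fin n → ℝ) × (Fin n → ℝ) =>
      f (p.1 - J.mulVec p.2) * fourierT (⇑g) p.2) (volume.prod volume) := by
    have hm : AEStronglyMeasurable
        (fun p : (Fin n → ℝ) × (Fin n → ℝ) => f p.1 * fourierT (⇑g) p.2)
        (volume.prod volume) :=
      ((f.continuous.comp continuous_fst).mul
        ((fourierT_continuous g).comp continuous_snd)).aestronglyMeasurable
    exact ((shear_mp J).integrable_comp hm).mpr hbase
  have hmeas : AEStronglyMeasurable (Function.uncurry fun x u =>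
      f (x - J.mulVec u) * (Complex.exp (2 * (π : ℂ) * Complex.I * ((u ⬝ᵥ x : ℝ) : ℂ)) *
        fourierT (⇑g) u) * Complex.exp (-(2 * (π : ℂ) * Complex.I * ((x ⬝ᵥ z : ℝ) : ℂ))))
      (volume.prod volume) := by
    apply Continuous.aestronglyMeasurable
    apply Continuous.mul
    · apply Continuous.mul
      · exact f.continuous.comp (continuous_fst.sub (hmv.comp continuous_snd))
      · apply Continuous.mul
        · exact Complex.continuous_exp.comp <| (continuous_const.mul <|
            Complex.continuous_ofReal.comp <|
              continuous_snd.dotProduct continuous_fst)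
        · exact (fourierT_continuous g).comp continuous_snd
    · exact Complex.continuous_exp.comp <| Continuous.neg <| continuous_const.mul <|
        Complex.continuous_ofReal.comp <| continuous_fst.dotProduct continuous_const
  apply Integrable.mono' hcomp.norm hmeas
  apply Filter.Eventually.of_forall
  rintro ⟨x, u⟩
  simp only [Function.uncurry, norm_mul, norm_norm]
  rw [norm_phase, norm_phase_neg]
  ring_nf
  exact le_refl _

end Aux

/-- For skew-symmetric `J` and Schwartz functions `f, g` on `ℝⁿ`, the
Fourier transform intertwines Rieffel's deformed product with `ω_J`-twisted convolution:
`(f ×_J g)^ = f̂ *_{ω_J} ĝ`. -/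
theorem stmt15 {n : ℕ} (J : Matrix (Fin n) (Fin n) ℝ) (hJ : J.transpose = -J)
    (f g : SchwartzMap (Fin n → ℝ) ℂ) :
    ∀ z, fourierT (deformedProd J (⇑f) (⇑g)) z = twConvJ J (fourierT ⇑f) (fourierT ⇑g) z := by
  intro z
  have hskew : ∀ w : Fin n → ℝ, J.mulVec w ⬝ᵥ w = 0 := by
    intro w
    have h1 : J.mulVec w ⬝ᵥ w = -(J.mulVec w ⬝ᵥ w) := by
      calc J.mulVec w ⬝ᵥ w = w ⬝ᵥ J.mulVec w := dotProduct_comm _ _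
        _ = Matrix.vecMul w J ⬝ᵥ w := dotProduct_mulVec _ _ _
        _ = (J.transpose.mulVec w) ⬝ᵥ w := by rw [Matrix.mulVec_transpose]
        _ = ((-J).mulVec w) ⬝ᵥ w := by rw [hJ]
        _ = -(J.mulVec w ⬝ᵥ w) := by rw [Matrix.neg_mulVec, neg_dotProduct]
    linarith
  -- Step A: inner v-integral
  have hinner : ∀ x u : Fin n → ℝ,
      (∫ v, f (x - J.mulVec u) * g (x - v) *
        Complex.exp (2 * (π : ℂ) * Complex.I * ((u ⬝ᵥ v : ℝ) : ℂ))) =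
      f (x - J.mulVec u) * (Complex.exp (2 * (π : ℂ) * Complex.I * ((u ⬝ᵥ x : ℝ) : ℂ)) *
        fourierT (⇑g) u) := by
    intro x u
    have h0 : (fun v => f (x - J.mulVec u) * g (x - v) *
        Complex.exp (2 * (π : ℂ) * Complex.I * ((u ⬝ᵥ v : ℝ) : ℂ))) =
        fun v => f (x - J.mulVec u) * (g (x - v) *
          Complex.exp (2 * (π : ℂ) * Complex.I * ((u ⬝ᵥ v : ℝ) : ℂ))) := by
      funext v; ring
    rw [h0, integral_const_mul]
    congr 1
    have hsub := integral_sub_left_eq_self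
      (fun v => g (x - v) * Complex.exp (2 * (π : ℂ) * Complex.I * ((u ⬝ᵥ v : ℝ) : ℂ))) volume x
    rw [← hsub]
    simp only [sub_sub_cancel]
    rw [fourierT, ← integral_const_mul]
    congr 1
    funext v
    rw [mul_comm (Complex.exp (2 * (π : ℂ) * Complex.I * ((u ⬝ᵥ x : ℝ) : ℂ))) _,
      mul_assoc (g v), ← Complex.exp_add]
    congr 1
    rw [dotProduct_sub, dotProduct_comm v u]
    push_cast
    ring
  -- Step B: rewrite LHS as a double integral and swap
  have hB : fourierT (deformedProd J (⇑f) (⇑g)) z =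
      ∫ u, ∫ x, f (x - J.mulVec u) *
        (Complex.exp (2 * (π : ℂ) * Complex.I * ((u ⬝ᵥ x : ℝ) : ℂ)) * fourierT (⇑g) u) *
        Complex.exp (-(2 * (π : ℂ) * Complex.I * ((x ⬝ᵥ z : ℝ) : ℂ))) := by
    rw [fourierT]
    have h1 : (fun x => deformedProd J (⇑f) (⇑g) x *
        Complex.exp (-(2 * (π : ℂ) * Complex.I * ((x ⬝ᵥ z : ℝ) : ℂ)))) =
        fun x => ∫ u, f (x - J.mulVec u) *
          (Complex.exp (2 * (π : ℂ) * Complex.I * ((u ⬝ᵥ x : ℝ) : ℂ)) * fourierT (⇑g) u) *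
          Complex.exp (-(2 * (π : ℂ) * Complex.I * ((x ⬝ᵥ z : ℝ) : ℂ))) := by
      funext x
      rw [deformedProd]
      simp only [hinner]
      rw [← MeasureTheory.integral_mul_const]
    rw [h1]
    exact integral_integral_swap (H_integrable J f g z)
  rw [hB]
  -- Step C: inner x-integral
  have hC : ∀ u : Fin n → ℝ,
      (∫ x, f (x - J.mulVec u) *
        (Complex.exp (2 * (π : ℂ) * Complex.I * ((u ⬝ᵥ x : ℝ) : ℂ)) * fourierT (⇑g) u) *
        Complex.exp (-(2 * (π : ℂ) * Complex.I * ((x ⬝ᵥ z : ℝ) : ℂ)))) =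
      fourierT (⇑g) u * (fourierT (⇑f) (z - u) *
        Complex.exp (-(2 * (π : ℂ) * Complex.I * ((J.mulVec u ⬝ᵥ z : ℝ) : ℂ)))) := by
    intro u
    have h2 : (fun x => f (x - J.mulVec u) *
        (Complex.exp (2 * (π : ℂ) * Complex.I * ((u ⬝ᵥ x : ℝ) : ℂ)) * fourierT (⇑g) u) *
        Complex.exp (-(2 * (π : ℂ) * Complex.I * ((x ⬝ᵥ z : ℝ) : ℂ)))) =
        fun x => fourierT (⇑g) u * (f (x - J.mulVec u) *
          Complex.exp (-(2 * (π : ℂ) * Complex.I * (((x ⬝ᵥ (z - u) : ℝ)) : ℂ)))) := by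
      funext x
      rw [mul_comm (Complex.exp _) (fourierT (⇑g) u), ← mul_assoc, mul_comm _ (fourierT (⇑g) u),
        mul_assoc, mul_assoc, ← Complex.exp_add]
      congr 2
      rw [dotProduct_sub, dotProduct_comm u x]
      push_cast
      ring
    rw [h2, integral_const_mul]
    congr 1
    have hshift := integral_add_right_eq_self (μ := volume)
      (fun x => f (x - J.mulVec u) *
        Complex.exp (-(2 * (π : ℂ) * Complex.I * (((x ⬝ᵥ (z - u) : ℝ)) : ℂ)))) (J.mulVec u)
    rw [← hshift]
    simp only [add_sub_cancel_right]
    rw [fourierT, ← MeasureTheory.integral_mul_const]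
    congr 1
    funext x
    rw [mul_assoc (f x), ← Complex.exp_add]
    congr 1
    rw [add_dotProduct, dotProduct_sub, dotProduct_sub, hskew u]
    push_cast
    ring
  simp only [hC]
  -- Step D: rewrite RHS
  rw [twConvJ]
  rw [← integral_sub_left_eq_self
    (fun u => fourierT (⇑f) u * fourierT (⇑g) (z - u) *
      Complex.exp (2 * (π : ℂ) * Complex.I * ((J.mulVec u ⬝ᵥ (z - u) : ℝ) : ℂ))) volume z]
  simp only [sub_sub_cancel]
  congr 1
  funext u
  have hexp : (J.mulVec (z - u) ⬝ᵥ u : ℝ) = -(J.mulVec u ⬝ᵥ z : ℝ) := by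
    rw [Matrix.mulVec_sub, sub_dotProduct, hskew u, sub_zero]
    calc J.mulVec z ⬝ᵥ u = u ⬝ᵥ J.mulVec z := dotProduct_comm _ _
      _ = Matrix.vecMul u J ⬝ᵥ z := dotProduct_mulVec _ _ _
      _ = (J.transpose.mulVec u) ⬝ᵥ z := by rw [Matrix.mulVec_transpose]
      _ = ((-J).mulVec u) ⬝ᵥ z := by rw [hJ]
      _ = -(J.mulVec u ⬝ᵥ z) := by rw [Matrix.neg_mulVec, neg_dotProduct]
  rw [hexp]
  push_cast
  ring_nf
end
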